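/- Let h : Q → P be an injective, integral homomorphism of fine, sharp additive commutative monoids, without nilpotents, and suppose the quotient monoid P/Q is isomorphic to ℕ. Then there exists a unique element p ∈ P such that the homomorphism Q ⊕ ℕ → P, (q, n) ↦ h(q) + n•p, is an isomorphism of monoids. -/

import Mathlib

/-- A (additive commutative) monoid is sharp if `x + y = 0` implies `x = 0`. -/
def Sharp (M : Type*) [AddCommMonoid M] : Prop :=
  ∀ x y : M, x + y = 0 → x = 0

/-- A monoid is cancellative if `a + c = b + c` implies `a = b`. -/
def Cancellative (M : Type*) [AddCommMonoid M] : Prop :=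
  ∀ a b c : M, a + c = b + c → a = b

/-- A monoid homomorphism `h : Q →+ P` is integral if whenever
`p1 + h q1 = p2 + h q2` there are `q3, q4, p` with `p1 = p + h q4`,
`p2 = p + h q3` and `q1 + q4 = q2 + q3`. -/
def IntegralHom {Q P : Type*} [AddCommMonoid Q] [AddCommMonoid P] (h : Q →+ P) : Prop :=
  ∀ (q1 q2 : Q) (p1 p2 : P), p1 + h q1 = p2 + h q2 →
    ∃ (q3 q4 : Q) (p : P), p1 = p + h q4 ∧ p2 = p + h q3 ∧ q1 + q4 = q2 + q3

/-- An element `p` of `P` is `Q`-primitive (relative to `h : Q →+ P`) if whenever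
`p = p' + h q` one has `q = 0`. -/
def QPrimitive {Q P : Type*} [AddCommMonoid Q] [AddCommMonoid P] (h : Q →+ P) (p : P) : Prop :=
  ∀ (p' : P) (q : Q), p = p' + h q → q = 0

/-- Membership in the ideal `I_Q = {h q + p : q ∈ Q, q ≠ 0, p ∈ P}`. -/
def MemIQ {Q P : Type*} [AddCommMonoid Q] [AddCommMonoid P] (h : Q →+ P) (p : P) : Prop :=
  ∃ q : Q, q ≠ 0 ∧ ∃ p' : P, p = h q + p'

/-- `h` is without nilpotents if `n • p ∈ I_Q` for some `n ≥ 1` implies `p ∈ I_Q`. -/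
def WithoutNilpotents {Q P : Type*} [AddCommMonoid Q] [AddCommMonoid P] (h : Q →+ P) : Prop :=
  ∀ (p : P) (n : ℕ), 1 ≤ n → MemIQ h (n • p) → MemIQ h p

/-- The congruence on `P` identifying `p ∼ p'` iff `p + h q = p' + h q'` for some
`q, q' ∈ Q`; the quotient monoid `P/Q` is its quotient. -/
def quotCon {Q P : Type*} [AddCommMonoid Q] [AddCommMonoid P] (h : Q →+ P) : AddCon P where
  r p p' := ∃ q q' : Q, p + h q = p' + h q'
  iseqv := by
    constructor
    · exact fun p => ⟨0, 0, rfl⟩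
    · rintro p p' ⟨q, q', e⟩; exact ⟨q', q, e.symm⟩
    · rintro p p' p'' ⟨q, q', e1⟩ ⟨s, s', e2⟩
      refine ⟨q + s, s' + q', ?_⟩
      calc p + h (q + s) = (p + h q) + h s := by rw [map_add, add_assoc]
        _ = (p' + h q') + h s := by rw [e1]
        _ = (p' + h s) + h q' := add_right_comm _ _ _
        _ = (p'' + h s') + h q' := by rw [e2]
        _ = p'' + h (s' + q') := by rw [map_add, add_assoc]
  add' := by
    rintro a b c d ⟨q1, q1', e1⟩ ⟨q2, q2', e2⟩
    refine ⟨q1 + q2, q1' + q2', ?_⟩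
    calc (a + c) + h (q1 + q2) = (a + h q1) + (c + h q2) := by
          rw [map_add]; exact add_add_add_comm _ _ _ _
      _ = (b + h q1') + (d + h q2') := by rw [e1, e2]
      _ = (b + d) + h (q1' + q2') := by rw [map_add]; exact (add_add_add_comm _ _ _ _).symm

/-- A monoid is saturated if it is cancellative and whenever `n • a = n • b + p`
for some `n ≥ 1` there is `p'` with `a = b + p'`. -/
def Saturated (M : Type*) [AddCommMonoid M] : Prop :=
  Cancellative M ∧ ∀ (a b p : M) (n : ℕ), 1 ≤ n → n • a = n • b + p → ∃ p' : M, a = b + p'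

section Aux
variable {M : Type*} [AddCommMonoid M]

theorem sharp_sum_eq_zero (hs : Sharp M) {ι : Type*} {s : Finset ι} {f : ι → M}
    (e : ∑ i ∈ s, f i = 0) : ∀ i ∈ s, f i = 0 := by
  induction s using Finset.cons_induction with
  | empty => simp
  | cons a s ha ih =>
    rw [Finset.sum_cons] at e
    have h1 : f a = 0 := hs _ _ e
    have h2 : ∑ i ∈ s, f i = 0 := hs _ _ (by rw [add_comm]; exact e)
    intro i hi
    rcases Finset.mem_cons.mp hi with rfl | hi
    · exact h1
    · exact ih h2 i hi

theorem sharp_nsmul_eq_zero (hs : Sharp M) {n : ℕ} {x : M} (hn : n ≠ 0) (e : n • x = 0) :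
    x = 0 := by
  obtain ⟨m, rfl⟩ := Nat.exists_eq_succ_of_ne_zero hn
  rw [succ_nsmul, add_comm] at e
  exact hs _ _ e

theorem divisors_finite (hsharp : Sharp M) (hcanc : Cancellative M)
    (hfg : AddMonoid.FG M) (x : M) : {a : M | ∃ b, a + b = x}.Finite := by
  classical
  obtain ⟨S, hS⟩ := hfg.fg_top
  set σ : (↥S → ℕ) →+ M :=
    { toFun := fun v => ∑ i, v i • (i : M)
      map_zero' := by simp
      map_add' := by intro u v; simp [add_nsmul, Finset.sum_add_distrib] } with hσ
  have hσ_single : ∀ j : ↥S, σ (Pi.single j 1) = (j : M) := by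
    intro j
    show ∑ i, Pi.single j 1 i • (i : M) = (j : M)
    rw [Finset.sum_eq_single j]
    · simp
    · intro b _ hb; simp [Pi.single_eq_of_ne hb]
    · simp
  have hsurj : ∀ a : M, ∃ v, σ v = a := by
    intro a
    have hle : AddSubmonoid.closure (S : Set M) ≤ AddMonoidHom.mrange σ := by
      rw [AddSubmonoid.closure_le]
      rintro s hs
      exact ⟨Pi.single ⟨s, hs⟩ 1, hσ_single ⟨s, hs⟩⟩
    have : a ∈ AddMonoidHom.mrange σ := hle (hS ▸ AddSubmonoid.mem_top a)
    exact this
  set fib : Set (↥S → ℕ) :=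
    {v | σ v = x ∧ ∀ i : ↥S, (i : M) = 0 → v i = 0} with hfibdef
  have hfib : fib.Finite := by
    by_contra hinf
    
    have hpwo : Set.IsPWO (Set.univ : Set (↥S → ℕ)) :=
      Set.isPWO_univ_iff.mpr inferInstance
    obtain ⟨m, n, hmn, hle⟩ := Set.partiallyWellOrderedOn_iff_exists_lt.mp hpwo
      (fun k => ((Set.Infinite.natEmbedding _ hinf) k).1)
      (fun _ => Set.mem_univ _)
    set u : ↥S → ℕ := ((Set.Infinite.natEmbedding _ hinf) m).1 with hu
    set w : ↥S → ℕ := ((Set.Infinite.natEmbedding _ hinf) n).1 with hw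
    have hu_mem : u ∈ fib := ((Set.Infinite.natEmbedding _ hinf) m).2
    have hw_mem : w ∈ fib := ((Set.Infinite.natEmbedding _ hinf) n).2
    have hne : u ≠ w := by
      intro hmem
      exact absurd (((Set.Infinite.natEmbedding _ hinf)).injective (Subtype.ext hmem))
        (Nat.ne_of_lt hmn)
    have huw : u + (w - u) = w := by
      funext i
      exact Nat.add_sub_cancel' (hle i)
    have hσd : σ (w - u) = 0 := by
      have h1 : σ u + σ (w - u) = σ w := by rw [← map_add, huw]
      rw [hu_mem.1, hw_mem.1] at h1
      exact hcanc _ _ x (by rw [zero_add, add_comm]; exact h1)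
    obtain ⟨i, hi⟩ : ∃ i, (w - u) i ≠ 0 := by
      by_contra hall
      push_neg at hall
      apply hne
      funext i
      have := hall i
      have h2 := huw
      have : u i + (w - u) i = w i := congrFun huw i
      omega
    have hterm : (w - u) i • (i : M) = 0 :=
      sharp_sum_eq_zero hsharp hσd i (Finset.mem_univ i)
    have hgi : (i : M) = 0 := sharp_nsmul_eq_zero hsharp hi hterm
    have hui : u i = 0 := hu_mem.2 i hgi
    have hwi : w i = 0 := hw_mem.2 i hgi
    have hdi : (w - u) i = w i - u i := rfl
    omega
  have zero_out : ∀ v : ↥S → ℕ,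
      σ (fun i => if (i : M) = 0 then 0 else v i) = σ v := by
    intro v
    show (∑ i : ↥S, (if (i : M) = 0 then 0 else v i) • (i : M)) = ∑ i : ↥S, v i • (i : M)
    refine Finset.sum_congr rfl fun i _ => ?_
    by_cases hgi : (i : M) = 0
    · simp [hgi]
    · simp [hgi]
  have hsub : {a : M | ∃ b, a + b = x} ⊆ σ '' (⋃ u ∈ fib, Set.Iic u) := by
    rintro a ⟨b, hab⟩
    obtain ⟨u, rfl⟩ := hsurj a
    obtain ⟨w, rfl⟩ := hsurj b
    set u₀ : ↥S → ℕ := fun i => if (i : M) = 0 then 0 else u i with hu₀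
    set w₀ : ↥S → ℕ := fun i => if (i : M) = 0 then 0 else w i with hw₀
    have hmem : u₀ + w₀ ∈ fib := by
      constructor
      · rw [map_add, zero_out, zero_out, hab]
      · intro i hgi
        show u₀ i + w₀ i = 0
        simp [hu₀, hw₀, hgi]
    refine ⟨u₀, Set.mem_biUnion hmem ?_, zero_out u⟩
    intro i
    exact Nat.le_add_right _ _
  exact ((hfib.biUnion (fun u _ => Set.finite_Iic u)).image σ).subset hsub

end Aux

/-- For an injective, integral homomorphism `h : Q →+ P` of fine, sharp monoids,
without nilpotents, with quotient monoid `P/Q` isomorphic to `ℕ`, there is a unique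
`p ∈ P` such that `(q, n) ↦ h q + n • p` is an isomorphism `Q ⊕ ℕ ≅ P`. -/
theorem splitting_of_quotient_nat {Q P : Type*} [AddCommMonoid Q] [AddCommMonoid P]
    (hQsharp : Sharp Q) (hQcanc : Cancellative Q) (hQfg : AddMonoid.FG Q)
    (hPsharp : Sharp P) (hPcanc : Cancellative P) (hPfg : AddMonoid.FG P)
    (h : Q →+ P) (hinj : Function.Injective h) (hint : IntegralHom h)
    (hnil : WithoutNilpotents h)
    (hquot : Nonempty ((quotCon h).Quotient ≃+ ℕ)) :
    ∃! p : P, Function.Bijective (fun x : Q × ℕ => h x.1 + x.2 • p) := by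
  classical
  obtain ⟨e⟩ := hquot
  set f : P →+ ℕ := e.toAddMonoidHom.comp (quotCon h).mk' with hfdef
  have hfh : ∀ q : Q, f (h q) = 0 := by
    intro q
    have hq : (quotCon h).mk' (h q) = (quotCon h).mk' (0 : P) := by
      rw [AddCon.coe_mk']
      exact (AddCon.eq _).mpr ⟨0, q, by simp⟩
    show e ((quotCon h).mk' (h q)) = 0
    rw [hq, map_zero, map_zero]
  have hrel : ∀ x y : P, f x = f y → ∃ q q' : Q, x + h q = y + h q' := by
    intro x y hxy
    have h1 : (quotCon h).mk' x = (quotCon h).mk' y :=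
      e.injective (show e ((quotCon h).mk' x) = e ((quotCon h).mk' y) from hxy)
    rw [AddCon.coe_mk'] at h1
    exact (AddCon.eq _).mp h1
  have hfsurj : Function.Surjective f :=
    e.surjective.comp AddCon.mk'_surjective
  have hker : ∀ x : P, f x = 0 → ∃ q, x = h q := by
    intro x hx
    obtain ⟨q, q', hq⟩ := hrel x 0 (by rw [hx, map_zero])
    rw [zero_add] at hq
    obtain ⟨q3, q4, p0, h1, h2, -⟩ := hint q q' x 0 (by rw [zero_add]; exact hq)
    have hp0 : p0 = 0 := hPsharp _ _ h2.symm
    exact ⟨q4, by rw [h1, hp0, zero_add]⟩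
  have hDfin : ∀ x : P, {a : P | ∃ b, a + b = x}.Finite :=
    divisors_finite hPsharp hPcanc hPfg
  set μ : P → ℕ := fun x => (hDfin x).toFinset.card with hμdef
  have key : ∀ n : ℕ, ∀ x : P, μ x = n → f x = 1 → ∃ p : P, QPrimitive h p ∧ f p = 1 := by
    intro n
    induction n using Nat.strong_induction_on with
    | _ n ih =>
      intro x hμx hx
      by_cases hp : QPrimitive h x
      · exact ⟨x, hp, hx⟩
      · rw [QPrimitive] at hp
        push_neg at hp
        obtain ⟨p', q, hx', hq⟩ := hp
        have hfp' : f p' = 1 := by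
          have h2 : f x = f p' + f (h q) := by rw [hx', map_add]
          rw [hfh, add_zero] at h2
          rw [← h2, hx]
        have hss : {a : P | ∃ b, a + b = p'} ⊂ {a : P | ∃ b, a + b = x} := by
          constructor
          · rintro a ⟨b, hab⟩
            exact ⟨b + h q, by rw [← add_assoc, hab, ← hx']⟩
          · intro hle
            obtain ⟨b, hb⟩ := hle (show x ∈ {a : P | ∃ b, a + b = x} from ⟨0, add_zero x⟩)
            have h0 : (h q + b) + p' = 0 + p' := by
              rw [zero_add, add_comm, ← add_assoc, ← hx', hb]
            have h1 : h q + b = 0 := hPcanc _ _ _ h0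
            have h2 : h q = 0 := hPsharp _ _ h1
            exact hq (hinj (by rw [h2, map_zero]))
        have hcard : μ p' < n := by
          rw [← hμx]
          exact Finset.card_lt_card
            (Set.Finite.toFinset_ssubset_toFinset.mpr hss)
        exact ih (μ p') hcard p' rfl hfp'
  obtain ⟨x1, hx1⟩ := hfsurj 1
  obtain ⟨p, hprim, hfp⟩ := key (μ x1) x1 rfl hx1
  have hfnp : ∀ n : ℕ, f (n • p) = n := by
    intro n
    rw [map_nsmul, hfp, smul_eq_mul, mul_one]
  have hsurjF : ∀ x : P, ∃ q : Q, ∃ n : ℕ, h q + n • p = x := by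
    intro x
    rcases Nat.eq_zero_or_pos (f x) with h0 | hpos
    · obtain ⟨q, rfl⟩ := hker x h0
      exact ⟨q, 0, by rw [zero_smul, add_zero]⟩
    · set m := f x with hm
      obtain ⟨q, q', hq⟩ := hrel x (m • p) (by rw [hfnp])
      obtain ⟨q3, q4, p0, h1, h2, -⟩ := hint q q' x (m • p) hq
      by_cases hq3 : q3 = 0
      · subst hq3
        rw [map_zero, add_zero] at h2
        exact ⟨q4, m, by rw [h1, ← h2, add_comm]⟩
      · exfalso
        have hmem : MemIQ h (m • p) := ⟨q3, hq3, p0, by rw [h2, add_comm]⟩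
        obtain ⟨qq, hqq, pp, hpp⟩ := hnil p m hpos hmem
        exact hqq (hprim pp qq (by rw [hpp, add_comm]))
  have hinjF : Function.Injective (fun x : Q × ℕ => h x.1 + x.2 • p) := by
    rintro ⟨q1, n1⟩ ⟨q2, n2⟩ heq
    simp only at heq
    have hfn : n1 = n2 := by
      have h1 : f (h q1 + n1 • p) = f (h q2 + n2 • p) := by rw [heq]
      rw [map_add, map_add, hfh, hfh, zero_add, zero_add, hfnp, hfnp] at h1
      exact h1
    subst hfn
    have hq12 : q1 = q2 := hinj (hPcanc _ _ _ heq)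
    rw [hq12]
  refine ⟨p, ⟨hinjF, fun x => ?_⟩, ?_⟩
  · obtain ⟨q, n, hqn⟩ := hsurjF x
    exact ⟨(q, n), hqn⟩
  · intro p' hp'
    have hfp' : f p' = 1 := by
      obtain ⟨⟨q, n⟩, hqn⟩ := hp'.2 x1
      simp only at hqn
      have hmul : n * f p' = 1 := by
        have h1 : f (h q + n • p') = 1 := by rw [hqn, hx1]
        rw [map_add, hfh, zero_add, map_nsmul, smul_eq_mul] at h1
        exact h1
      exact Nat.eq_one_of_mul_eq_one_left hmul
    obtain ⟨q, m, hqm⟩ := hsurjF p'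
    have hm1 : m = 1 := by
      have h1 : f (h q + m • p) = f p' := by rw [hqm]
      rw [map_add, hfh, zero_add, hfnp, hfp'] at h1
      exact h1
    subst hm1
    rw [one_smul] at hqm
    obtain ⟨⟨q', m'⟩, hq'm'⟩ := hp'.2 p
    simp only at hq'm'
    have hm'1 : m' = 1 := by
      have h1 : f (h q' + m' • p') = f p := by rw [hq'm']
      rw [map_add, hfh, zero_add, map_nsmul, hfp', smul_eq_mul, mul_one, hfp] at h1
      exact h1
    subst hm'1
    rw [one_smul] at hq'm'
    have hcomb : h (q + q') + p' = 0 + p' := by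
      rw [zero_add, map_add, add_assoc, hq'm', hqm]
    have hz : h (q + q') = 0 := hPcanc _ _ _ hcomb
    have hqz : q + q' = 0 := hinj (by rw [hz, map_zero])
    have hq0 : q = 0 := hQsharp _ _ hqz
    rw [← hqm, hq0, map_zero, zero_add]
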